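/- Let n ≥ 2 be an integer, α > 0, p ∈ {1,…,n−1} coprime to n, and let g be a type (i) coupling satisfying the quantisation condition M ∈ ℤ ∖ {0}. Then for every r ∈ {1,…,n−1}, every ν ∈ S_n(ω_r), and every μ ∈ Λ⁺_{p,|M|} with μ+ν ∉ Λ⁺_{p,|M|}: all sine denominators occurring in V_ν(g; ρ_p+sgn(M)μ) are nonzero and V_ν(g; ρ_p+sgn(M)μ) = 0. -/

import Mathlib

noncomputable section
open Real Finset
open scoped Classical

/-- The standard basis vector `e_j` of `ℝⁿ` (1-based index), extended `n`-periodically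
(`e_{n+j} = e_j`). -/
def ee (n j : ℕ) : Fin n → ℝ := fun i => if ((i : ℕ) + 1) % n = j % n then 1 else 0

/-- The standard inner product on `ℝⁿ`. -/
def inn {n : ℕ} (x y : Fin n → ℝ) : ℝ := ∑ i, x i * y i

/-- The coordinate `x_j` (1-based index) with the convention `x_{n+k} = x_k - 2π/α`. -/
def coord {n : ℕ} (α : ℝ) (x : Fin n → ℝ) (j : ℕ) : ℝ :=
  if h : 0 < n then x ⟨(j - 1) % n, Nat.mod_lt _ h⟩ - 2 * π / α * (((j - 1) / n : ℕ) : ℝ)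
  else 0

/-- The simple roots `a_{j,p} = e_j - e_{j+p}`. -/
def aa (n p j : ℕ) : Fin n → ℝ := ee n j - ee n (j + p)

/-- The closed simplex `Σ̄_{g,p} = {x ∈ E_n : sgn(M)(x_j - x_{j+p} - g) ≥ 0, j = 1,…,n}`,
where `M = 2πp/α - ng`. -/
def SigmaBar (n p : ℕ) (α g : ℝ) : Set (Fin n → ℝ) :=
  {x | (∑ i, x i) = 0 ∧ ∀ j ∈ Icc 1 n,
    0 ≤ Real.sign (2 * π * p / α - n * g) * (coord α x j - coord α x (j + p) - g)}

/-- The interior `Σ_{g,p}` of the simplex, cut out by the strict inequalities. -/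
def SigmaInt (n p : ℕ) (α g : ℝ) : Set (Fin n → ℝ) :=
  {x | (∑ i, x i) = 0 ∧ ∀ j ∈ Icc 1 n,
    0 < Real.sign (2 * π * p / α - n * g) * (coord α x j - coord α x (j + p) - g)}

/-- `g` is a type (i) coupling, with `q ∈ {1,…,n-1}` the multiplicative inverse of `p` mod `n`. -/
def TypeI (n p q : ℕ) (α g : ℝ) : Prop :=
  1 ≤ q ∧ q ≤ n - 1 ∧ (p * q) % n = 1 % n ∧
  ((2 * π / α * ((p : ℝ) / n - 1 / ((n : ℝ) * q)) < g ∧ g < 2 * π / α * ((p : ℝ) / n)) ∨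
   (2 * π / α * ((p : ℝ) / n) < g ∧
      g < 2 * π / α * ((p : ℝ) / n + 1 / ((n : ℝ) * ((n : ℝ) - q)))))

/-- `ρ_p = g(ω_{1,p}+…+ω_{n-p,p}) + (g - 2π/α)(ω_{n-p+1,p}+…+ω_{n-1,p})`. -/
def rhoP (n p : ℕ) (α g : ℝ) (ω : ℕ → Fin n → ℝ) : Fin n → ℝ :=
  g • (∑ j ∈ Icc 1 (n - p), ω j) + (g - 2 * π / α) • (∑ j ∈ Icc (n - p + 1) (n - 1), ω j)

/-- `Λ⁺_{p,|M|}`: nonnegative integral combinations of the `ω_{j,p}` with coefficient sum `≤ |M|`. -/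
def Lam (n : ℕ) (Mabs : ℝ) (ω : ℕ → Fin n → ℝ) : Set (Fin n → ℝ) :=
  {μ | ∃ m : ℕ → ℕ, (∑ j ∈ Icc 1 (n - 1), (m j : ℝ)) ≤ Mabs ∧
    μ = ∑ j ∈ Icc 1 (n - 1), (m j : ℝ) • ω j}

/-- The fundamental weight `ω_r = e_1+…+e_r - (r/n)(e_1+…+e_n)`. -/
def omegaStd (n r : ℕ) : Fin n → ℝ :=
  fun i => (if (i : ℕ) + 1 ≤ r then 1 else 0) - (r : ℝ) / n

/-- Membership in the orbit `S_n(ω_r)` of `ω_r` under coordinate permutations. -/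
def inOrbit (n r : ℕ) (ν : Fin n → ℝ) : Prop :=
  ∃ σ : Equiv.Perm (Fin n), ν = fun i => omegaStd n r (σ i)

/-- The orbit `S_n(ω_r)` as a finite set. -/
def orbitF (n r : ℕ) : Finset (Fin n → ℝ) :=
  Finset.image (fun σ : Equiv.Perm (Fin n) => fun i => omegaStd n r (σ i)) Finset.univ

/-- `V_ν(g;x) = ∏_{a ∈ A_{n-1}, ⟨a,ν⟩=1} sin(α(⟨a,x⟩+g)/2)/sin(α⟨a,x⟩/2)`. -/
def Vnu (n : ℕ) (α g : ℝ) (ν x : Fin n → ℝ) : ℝ :=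
  ∏ j ∈ Icc 1 n, ∏ k ∈ Icc 1 n,
    if j ≠ k ∧ inn (ee n j - ee n k) ν = 1 then
      Real.sin (α * (inn (ee n j - ee n k) x + g) / 2) /
        Real.sin (α * inn (ee n j - ee n k) x / 2)
    else 1

/-- `V_J(g;x) = ∏_{j∈J, k∉J} sin(α(x_j-x_k+g)/2)/sin(α(x_j-x_k)/2)`. -/
def VJ (n : ℕ) (α g : ℝ) (J : Finset ℕ) (x : Fin n → ℝ) : ℝ :=
  ∏ j ∈ J, ∏ k ∈ Icc 1 n \ J,
    Real.sin (α * (coord α x j - coord α x k + g) / 2) /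
      Real.sin (α * (coord α x j - coord α x k) / 2)

/-- `F_J(g;x) = ∏_{j,k∈J, j≠k} sin(α(x_j-x_k)/2)/sin(α(x_j-x_k+g)/2)`. -/
def FJ (n : ℕ) (α g : ℝ) (J : Finset ℕ) (x : Fin n → ℝ) : ℝ :=
  ∏ j ∈ J, ∏ k ∈ J,
    if j ≠ k then
      Real.sin (α * (coord α x j - coord α x k) / 2) /
        Real.sin (α * (coord α x j - coord α x k + g) / 2)
    else 1

/-- The trigonometric Pochhammer symbol `(z : sin_α)_m`. -/
def poch (α z : ℝ) (m : ℤ) : ℝ :=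
  if 0 ≤ m then ∏ l ∈ Finset.range m.toNat, Real.sin (α * (z + l) / 2)
  else 1 / ∏ l ∈ Finset.Icc 1 (-m).toNat, Real.sin (α * (z - l) / 2)

/-- Membership in the set of positive roots `A⁺_{n-1,p}`. -/
def inPosRoots (n p : ℕ) (v : Fin n → ℝ) : Prop :=
  (∃ j ∈ Icc 1 n, ∃ k ∈ Icc 1 n, j ≠ k ∧ v = ee n j - ee n k) ∧
  ∃ c : ℕ → ℕ, v = ∑ j ∈ Icc 1 (n - 1), (c j : ℝ) • aa n p j

/-- The lattice function `Δ_p(μ)`. -/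
def Delta (n p : ℕ) (α g : ℝ) (ω : ℕ → Fin n → ℝ) (μ : Fin n → ℝ) : ℝ :=
  ∏ j ∈ Icc 1 n, ∏ k ∈ Icc 1 n,
    if inPosRoots n p (ee n j - ee n k) then
      Real.sin (α * inn (ee n j - ee n k)
          (rhoP n p α g ω + Real.sign (2 * π * p / α - n * g) • μ) / 2) /
        Real.sin (α * inn (ee n j - ee n k) (rhoP n p α g ω) / 2) *
      (poch α (inn (ee n j - ee n k) (rhoP n p α g ω) +
            Real.sign (2 * π * p / α - n * g) * g)
          ⌊Real.sign (2 * π * p / α - n * g) * inn (ee n j - ee n k) μ⌋ /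
        poch α (inn (ee n j - ee n k) (rhoP n p α g ω) + 1 -
            Real.sign (2 * π * p / α - n * g) * g)
          ⌊Real.sign (2 * π * p / α - n * g) * inn (ee n j - ee n k) μ⌋)
    else 1

/-- The coefficient `W_ν(ρ_p + sgn(M)μ)` (equal to `0` when `μ + ν ∉ Λ⁺_{p,|M|}`). -/
def Wmu (n p : ℕ) (α g : ℝ) (ω : ℕ → Fin n → ℝ) (s : (Fin n → ℝ) → ℝ)
    (μ ν : Fin n → ℝ) : ℝ :=
  if μ + ν ∈ Lam n |2 * π * p / α - n * g| ω then
    s ν * Real.sqrt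
      (Vnu n α g ν (rhoP n p α g ω + Real.sign (2 * π * p / α - n * g) • μ) *
       Vnu n α g ν (-(rhoP n p α g ω) - Real.sign (2 * π * p / α - n * g) • (μ + ν)))
  else 0

/-- The discrete difference operator `Ŝ_{r,M}` acting on lattice functions. -/
def SOp (n p r : ℕ) (α g : ℝ) (ω : ℕ → Fin n → ℝ) (s : (Fin n → ℝ) → ℝ)
    (φ : (Fin n → ℝ) → ℂ) : (Fin n → ℝ) → ℂ :=
  fun x => ∑ ν ∈ orbitF n r,
    (Wmu n p α g ω s (Real.sign (2 * π * p / α - n * g) • (x - rhoP n p α g ω)) ν : ℂ) *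
      φ (x + Real.sign (2 * π * p / α - n * g) • ν)

/-- The inner product `(φ, ψ)_{p,M}` on lattice functions. -/
def ip (n p : ℕ) (α g : ℝ) (ω : ℕ → Fin n → ℝ) (φ ψ : (Fin n → ℝ) → ℂ) : ℂ :=
  ∑ᶠ μ ∈ Lam n |2 * π * p / α - n * g| ω,
    φ (rhoP n p α g ω + Real.sign (2 * π * p / α - n * g) • μ) *
      starRingEnd ℂ (ψ (rhoP n p α g ω + Real.sign (2 * π * p / α - n * g) • μ))

/-- The elementary symmetric function `ℰ_r(u) = Σ_{ν ∈ S_n(ω_r)} exp(iα⟨ν,u⟩)`. -/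
def calE (n r : ℕ) (α : ℝ) (u : Fin n → ℝ) : ℂ :=
  ∑ ν ∈ orbitF n r, Complex.exp (Complex.I * (α : ℂ) * (inn ν u : ℂ))

lemma ee_congr {n j k : ℕ} (h : j % n = k % n) : ee n j = ee n k := by
  unfold ee; rw [h]

lemma aa_congr {n p j k : ℕ} (h : j % n = k % n) : aa n p j = aa n p k := by
  unfold aa; rw [ee_congr h, ee_congr (Nat.ModEq.add_right p h)]

lemma mod_succ_inj {n x y : ℕ} (hx : x < n) (hy : y < n) (h : (x+1) % n = (y+1) % n) : x = y := by
  have h2 : x % n = y % n := Nat.ModEq.add_right_cancel' 1 h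
  rwa [Nat.mod_eq_of_lt hx, Nat.mod_eq_of_lt hy] at h2

lemma inn_ee {n : ℕ} (hn : 0 < n) (j : ℕ) (hj : 1 ≤ j) (v : Fin n → ℝ) :
    inn (ee n j) v = v ⟨(j-1) % n, Nat.mod_lt _ hn⟩ := by
  have h2 : ((j-1) % n + 1) % n = j % n := by
    rw [Nat.mod_add_mod, Nat.sub_add_cancel hj]
  unfold inn ee
  rw [Finset.sum_eq_single (⟨(j-1) % n, Nat.mod_lt _ hn⟩ : Fin n)]
  · rw [if_pos h2, one_mul]
  · intro b _ hb
    rw [if_neg, zero_mul]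
    intro hcon
    exact hb (Fin.ext (mod_succ_inj b.isLt (Nat.mod_lt _ hn) (hcon.trans h2.symm)))
  · intro h; exact absurd (Finset.mem_univ _) h

lemma inn_sub_left {n : ℕ} (u w v : Fin n → ℝ) : inn (u - w) v = inn u v - inn w v := by
  unfold inn
  rw [← Finset.sum_sub_distrib]
  exact Finset.sum_congr rfl fun i _ => by simp [sub_mul]

lemma inn_neg_left {n : ℕ} (u v : Fin n → ℝ) : inn (-u) v = -inn u v := by
  unfold inn; rw [← Finset.sum_neg_distrib]; exact Finset.sum_congr rfl fun i _ => by simp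

lemma inn_sum_left {n : ℕ} {ι : Type*} (s : Finset ι) (f : ι → Fin n → ℝ) (v : Fin n → ℝ) :
    inn (∑ i ∈ s, f i) v = ∑ i ∈ s, inn (f i) v := by
  unfold inn
  rw [Finset.sum_comm]
  exact Finset.sum_congr rfl fun i _ => by rw [← Finset.sum_mul]; simp

lemma inn_add_right {n : ℕ} (v u w : Fin n → ℝ) : inn v (u + w) = inn v u + inn v w := by
  unfold inn
  rw [← Finset.sum_add_distrib]
  exact Finset.sum_congr rfl fun i _ => by simp [mul_add]

lemma inn_smul_right {n : ℕ} (c : ℝ) (v u : Fin n → ℝ) : inn v (c • u) = c * inn v u := by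
  unfold inn
  rw [Finset.mul_sum]
  exact Finset.sum_congr rfl fun i _ => by simp; ring

lemma inn_sub_right {n : ℕ} (v u w : Fin n → ℝ) : inn v (u - w) = inn v u - inn v w := by
  unfold inn
  rw [← Finset.sum_sub_distrib]
  exact Finset.sum_congr rfl fun i _ => by simp [mul_sub]

lemma inn_sum_right {n : ℕ} {ι : Type*} (s : Finset ι) (v : Fin n → ℝ) (f : ι → Fin n → ℝ) :
    inn v (∑ i ∈ s, f i) = ∑ i ∈ s, inn v (f i) := by
  unfold inn
  rw [Finset.sum_comm]
  exact Finset.sum_congr rfl fun i _ => by rw [← Finset.mul_sum]; simp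

lemma inn_zero_left {n : ℕ} (v : Fin n → ℝ) : inn 0 v = 0 := by unfold inn; simp

lemma telescope (n p j : ℕ) : ∀ t : ℕ, ee n j - ee n (j + t*p) = ∑ s ∈ Finset.range t, aa n p (j + s*p)
  | 0 => by simp
  | (t+1) => by
    rw [Finset.sum_range_succ, ← telescope n p j t]
    unfold aa
    have : j + (t+1)*p = j + t*p + p := by ring
    rw [this]; abel

lemma coprime_q {n p q : ℕ} (hn : 2 ≤ n) (hpq : (p*q) % n = 1 % n) : Nat.Coprime q n := by
  have h1 : p*q % n = 1 := by rw [hpq, Nat.mod_eq_of_lt (by omega)]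
  have h2 : n * (p*q/n) + 1 = p*q := by
    have := Nat.div_add_mod (p*q) n; omega
  have hd : Nat.gcd q n ∣ 1 := by
    have hq : Nat.gcd q n ∣ p * q := Dvd.dvd.mul_left (Nat.gcd_dvd_left q n) p
    have hnn : Nat.gcd q n ∣ n * (p*q/n) := Dvd.dvd.mul_right (Nat.gcd_dvd_right q n) _
    have h3 : p*q - n*(p*q/n) = 1 := by omega
    calc Nat.gcd q n ∣ p*q - n*(p*q/n) := Nat.dvd_sub hq hnn
      _ = 1 := h3
  exact Nat.eq_one_of_dvd_one hd

lemma chain_t {n p q j k : ℕ} (hn : 2 ≤ n) (hpq : (p*q) % n = 1 % n)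
    (hj1 : 1 ≤ j) (hjn : j ≤ n) (hk1 : 1 ≤ k) (hkn : k ≤ n) (hjk : j ≠ k) :
    ∃ t : ℕ, 1 ≤ t ∧ t ≤ n - 1 ∧ (j + t*p) % n = k % n := by
  refine ⟨((n + k - j) * q) % n, ?_, ?_, ?_⟩
  · by_contra h
    have h0 : ((n + k - j) * q) % n = 0 := by omega
    have hdvd : n ∣ (n + k - j) * q := Nat.dvd_of_mod_eq_zero h0
    have hdvd2 : n ∣ (n + k - j) := (Nat.Coprime.dvd_of_dvd_mul_right
      (Nat.Coprime.symm (coprime_q hn hpq)) hdvd)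
    obtain ⟨c, hc⟩ := hdvd2
    have hc2 : c < 2 := by
      have : n * c < n * 2 := by omega
      exact Nat.lt_of_mul_lt_mul_left this
    interval_cases c <;> omega
  · have := Nat.mod_lt ((n + k - j) * q) (show 0 < n by omega); omega
  · have h1 : ((n + k - j) * q) % n * p ≡ (n + k - j) * (q * p) [MOD n] := by
      calc ((n + k - j) * q) % n * p ≡ (n + k - j) * q * p [MOD n] :=
            (Nat.mod_modEq _ n).mul_right p
        _ = (n + k - j) * (q * p) := by ring
    have h2 : (n + k - j) * (q * p) ≡ (n + k - j) * 1 [MOD n] := by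
      apply Nat.ModEq.mul_left
      show q * p ≡ 1 [MOD n]
      calc q * p = p * q := by ring
        _ ≡ 1 [MOD n] := hpq
    have h3 : j + ((n + k - j) * q) % n * p ≡ j + (n + k - j) [MOD n] :=
      Nat.ModEq.add_left j (h1.trans (by simpa using h2))
    have h4 : j + (n + k - j) = n + k := by omega
    calc (j + ((n + k - j) * q) % n * p) % n = (j + (n+k-j)) % n := h3
      _ = (n + k) % n := by rw [h4]
      _ = k % n := Nat.add_mod_left n k

lemma res_inj {n p : ℕ} (hcop : Nat.Coprime p n) {c s1 s2 : ℕ} (h1 : s1 < n) (h2 : s2 < n)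
    (h : (c + s1*p) % n = (c + s2*p) % n) : s1 = s2 := by
  have h3 : s1 * p ≡ s2 * p [MOD n] := Nat.ModEq.add_left_cancel' c h
  have h4 : s1 ≡ s2 [MOD n] := Nat.ModEq.cancel_right_of_coprime hcop.symm h3
  rwa [Nat.ModEq, Nat.mod_eq_of_lt h1, Nat.mod_eq_of_lt h2] at h4

lemma sum_aa {n p q : ℕ} (hn : 2 ≤ n) (hpq : (p*q) % n = 1 % n) :
    ∑ ℓ ∈ Icc 1 n, aa n p ℓ = 0 := by
  have hqp : q * p ≡ 1 [MOD n] := by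
    calc q * p = p * q := by ring
      _ ≡ 1 [MOD n] := hpq
  have h0 : (∑ s ∈ Finset.range n, aa n p (1+s*p)) = 0 := by
    rw [← telescope n p 1 n]
    rw [show ee n (1 + n*p) = ee n 1 from ee_congr (by simp [Nat.add_mul_mod_self_left])]
    simp
  rw [← h0]
  apply Finset.sum_nbij' (i := fun ℓ => ((ℓ-1)*q) % n) (j := fun s => (s*p) % n + 1)
  · intro a ha
    simp only [Finset.mem_range]
    exact Nat.mod_lt _ (by omega)
  · intro s hs
    simp only [Finset.mem_Icc]
    have := Nat.mod_lt (s*p) (show 0 < n by omega)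
    omega
  · intro a ha
    simp only [Finset.mem_Icc] at ha
    have : ((a-1)*q) % n * p ≡ a - 1 [MOD n] := by
      calc ((a-1)*q) % n * p ≡ (a-1)*q*p [MOD n] := (Nat.mod_modEq _ n).mul_right p
        _ = (a-1)*(q*p) := by ring
        _ ≡ (a-1) * 1 [MOD n] := Nat.ModEq.mul_left _ hqp
        _ = a - 1 := by ring
    have h5 : ((a-1)*q) % n * p % n = (a-1) % n := this
    rw [h5, Nat.mod_eq_of_lt (by omega)]
    omega
  · intro s hs
    simp only [Finset.mem_range] at hs
    have : (s*p % n + 1 - 1) * q ≡ s [MOD n] := by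
      calc (s*p % n + 1 - 1) * q = (s*p % n) * q := by simp
        _ ≡ s*p*q [MOD n] := (Nat.mod_modEq _ n).mul_right q
        _ = s*(p*q) := by ring
        _ ≡ s * 1 [MOD n] := Nat.ModEq.mul_left _ hpq
        _ = s := by ring
    have h5 : (s*p % n + 1 - 1) * q % n = s % n := this
    rw [h5, Nat.mod_eq_of_lt hs]
  · intro a ha
    simp only [Finset.mem_Icc] at ha
    apply aa_congr
    have : 1 + ((a-1)*q) % n * p ≡ a [MOD n] := by
      calc 1 + ((a-1)*q) % n * p ≡ 1 + (a-1)*(q*p) [MOD n] := by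
            apply Nat.ModEq.add_left
            calc ((a-1)*q) % n * p ≡ (a-1)*q*p [MOD n] := (Nat.mod_modEq _ n).mul_right p
              _ = (a-1)*(q*p) := by ring
        _ ≡ 1 + (a-1)*1 [MOD n] := Nat.ModEq.add_left _ (Nat.ModEq.mul_left _ hqp)
        _ = a := by omega
    exact this.symm

lemma key_arith (n q' t : ℕ) (β Mabs Y : ℝ) (v : ℤ)
    (hn : 2 ≤ n) (hq1 : 1 ≤ q')
    (hβ : Mabs * q' < β) (hM1 : 0 < Mabs)
    (ht1 : 1 ≤ t) (ht2 : t ≤ n - 1)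
    (hY0 : 0 ≤ Y) (hYM : Y ≤ Mabs)
    (hv : v ≠ 0)
    (heq : β * v = t * Mabs - n * Y)
    (hcong : (n:ℤ) ∣ ((t:ℤ) - v * q')) : False := by
  have htz : (t:ℤ) ≤ (n:ℤ) - 1 := by omega
  have htz1 : (1:ℤ) ≤ t := by omega
  have hq1z : (1:ℤ) ≤ (q':ℤ) := by omega
  rcases lt_or_gt_of_ne hv with hneg | hpos
  · set w : ℤ := -v with hw
    have hw1 : 1 ≤ w := by omega
    have hr : ((q':ℤ) * w : ℝ) < (((n:ℤ) - t : ℤ) : ℝ) := by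
      have h1 : Mabs * q' * (w:ℝ) < β * (w:ℝ) :=
        mul_lt_mul_of_pos_right hβ (by exact_mod_cast hw1.trans_lt' zero_lt_one)
      have h2 : β * (w:ℝ) = (n:ℝ) * Y - (t:ℝ) * Mabs := by
        have hc : ((w:ℤ):ℝ) = -((v:ℤ):ℝ) := by push_cast [hw]; ring
        rw [hc]; linarith [heq]
      have h3 : (n:ℝ) * Y ≤ (n:ℝ) * Mabs :=
        mul_le_mul_of_nonneg_left hYM (by positivity)
      have h4 : Mabs * ((q':ℝ) * w) < Mabs * ((n:ℝ) - t) := by nlinarith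
      have h5 := (mul_lt_mul_iff_right₀ hM1).mp h4
      push_cast
      linarith
    have hz : (q':ℤ) * w < (n:ℤ) - t := by exact_mod_cast hr
    have hk1 : 1 ≤ w * (q':ℤ) := by nlinarith
    have hpos2 : 0 < (t:ℤ) - v * q' := by
      have : (t:ℤ) - v * q' = t + w * q' := by rw [hw]; ring
      omega
    have hge : (n:ℤ) ≤ (t:ℤ) - v * q' := Int.le_of_dvd hpos2 hcong
    have : (t:ℤ) - v * q' = t + w * q' := by rw [hw]; ring
    nlinarith
  · have hr : ((q':ℤ) * v : ℝ) < ((t:ℤ) : ℝ) := by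
      have h1 : Mabs * q' * (v:ℝ) < β * (v:ℝ) :=
        mul_lt_mul_of_pos_right hβ (by exact_mod_cast hpos)
      have h2 : β * (v:ℝ) ≤ (t:ℝ) * Mabs := by
        have h3 : 0 ≤ (n:ℝ) * Y := by positivity
        linarith [heq]
      have h4 : Mabs * ((q':ℝ) * v) < Mabs * (t:ℝ) := by nlinarith
      have h5 := (mul_lt_mul_iff_right₀ hM1).mp h4
      push_cast
      linarith
    have hz : (q':ℤ) * v < (t:ℤ) := by exact_mod_cast hr
    have hk1 : 1 ≤ v * (q':ℤ) := by nlinarith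
    have hpos2 : 0 < (t:ℤ) - v * q' := by nlinarith
    have hge : (n:ℤ) ≤ (t:ℤ) - v * q' := Int.le_of_dvd hpos2 hcong
    nlinarith

lemma const_of_pairings {n p q : ℕ} (hn : 2 ≤ n) (hpq : (p*q) % n = 1 % n)
    (v : Fin n → ℝ) (hsum : (∑ i, v i) = 0)
    (hpair : ∀ ℓ ∈ Icc 1 (n-1), inn (aa n p ℓ) v = 0) : v = 0 := by
  have hn0 : 0 < n := by omega
  have hnmem : n ∉ Icc 1 (n-1) := by simp only [Finset.mem_Icc]; omega
  have hIcc : Icc 1 n = insert n (Icc 1 (n-1)) := by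
    ext z; simp only [Finset.mem_Icc, Finset.mem_insert]; omega
  have hpairn : inn (aa n p n) v = 0 := by
    have h0 := sum_aa hn hpq (p := p)
    rw [hIcc, Finset.sum_insert hnmem] at h0
    have haan : aa n p n = -∑ ℓ ∈ Icc 1 (n-1), aa n p ℓ := by
      rw [eq_neg_iff_add_eq_zero]; exact h0
    rw [haan, inn_neg_left, inn_sum_left]
    rw [Finset.sum_congr rfl (fun ℓ hℓ => hpair ℓ hℓ)]
    simp
  have hpair' : ∀ ℓ ∈ Icc 1 n, inn (aa n p ℓ) v = 0 := by
    intro ℓ hℓ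
    simp only [Finset.mem_Icc] at hℓ
    rcases Nat.lt_or_ge ℓ n with h | h
    · exact hpair ℓ (by simp only [Finset.mem_Icc]; omega)
    · have : ℓ = n := by omega
      rw [this]; exact hpairn
  have hfix : ∀ i : Fin n, (⟨((i:ℕ)+1-1) % n, Nat.mod_lt _ hn0⟩ : Fin n) = i :=
    fun i => Fin.ext (by simp [Nat.mod_eq_of_lt i.isLt])
  have hconst : ∀ i i' : Fin n, v i = v i' := by
    intro i i'
    rcases eq_or_ne i i' with h | h
    · rw [h]
    · have hne : (i:ℕ) + 1 ≠ (i':ℕ) + 1 := by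
        intro hcon; exact h (Fin.ext (by omega))
      obtain ⟨t, ht1, ht2, htm⟩ := chain_t (q := q) hn hpq
        (show 1 ≤ (i:ℕ)+1 by omega) (show (i:ℕ)+1 ≤ n from i.isLt)
        (show 1 ≤ (i':ℕ)+1 by omega) (show (i':ℕ)+1 ≤ n from i'.isLt) hne
      have hvec : ee n ((i:ℕ)+1) - ee n ((i':ℕ)+1)
          = ∑ s ∈ Finset.range t, aa n p ((i:ℕ)+1 + s*p) := by
        rw [← telescope n p ((i:ℕ)+1) t]
        rw [ee_congr htm]
      have hz : inn (ee n ((i:ℕ)+1) - ee n ((i':ℕ)+1)) v = 0 := by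
        rw [hvec, inn_sum_left]
        apply Finset.sum_eq_zero
        intro s _
        have hres : aa n p ((i:ℕ)+1 + s*p) = aa n p (((i:ℕ) + s*p) % n + 1) := by
          apply aa_congr
          conv_rhs => rw [Nat.mod_add_mod]
          congr 1
          omega
        rw [hres]
        apply hpair'
        simp only [Finset.mem_Icc]
        have := Nat.mod_lt ((i:ℕ) + s*p) hn0
        omega
      rw [inn_sub_left, inn_ee hn0 _ (by omega) v, inn_ee hn0 _ (by omega) v,
        hfix, hfix] at hz
      linarith
  have hzero : v ⟨0, hn0⟩ = 0 := by
    have hs2 : (∑ i : Fin n, v i) = n * v ⟨0, hn0⟩ := by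
      rw [Finset.sum_congr rfl (fun i _ => hconst i ⟨0, hn0⟩)]
      simp [Finset.card_univ, mul_comm]
    rw [hsum] at hs2
    have hnne : (n:ℝ) ≠ 0 := by positivity
    rcases mul_eq_zero.mp hs2.symm with h | h
    · exact absurd h hnne
    · exact h
  funext i
  rw [hconst i ⟨0, hn0⟩, hzero]
  rfl

/-- Lemma 2.2, second part: for `μ ∈ Λ⁺_{p,|M|}` with `μ+ν ∉ Λ⁺_{p,|M|}`,
all sine denominators in `V_ν(g;ρ_p+sgn(M)μ)` are nonzero and `V_ν(g;ρ_p+sgn(M)μ) = 0`. -/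
theorem statement8 (n p q : ℕ) (α g : ℝ)
    (hn : 2 ≤ n) (hα : 0 < α) (hp1 : 1 ≤ p) (hpn : p ≤ n - 1) (hcop : Nat.Coprime p n)
    (htype : TypeI n p q α g)
    (Mz : ℤ) (hMz : 2 * π * p / α - n * g = (Mz : ℝ)) (hMz0 : Mz ≠ 0)
    (ω : ℕ → Fin n → ℝ)
    (hωE : ∀ k : ℕ, 1 ≤ k → k ≤ n - 1 → ∑ i, ω k i = 0)
    (hωδ : ∀ j : ℕ, 1 ≤ j → j ≤ n - 1 → ∀ k : ℕ, 1 ≤ k → k ≤ n - 1 →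
      inn (aa n p j) (ω k) = if j = k then (1 : ℝ) else 0)
    (r : ℕ) (hr1 : 1 ≤ r) (hrn : r ≤ n - 1)
    (ν : Fin n → ℝ) (hν : inOrbit n r ν)
    (μ : Fin n → ℝ) (hμ : μ ∈ Lam n |2 * π * p / α - n * g| ω)
    (hμν : μ + ν ∉ Lam n |2 * π * p / α - n * g| ω) :
    (∀ j ∈ Icc 1 n, ∀ k ∈ Icc 1 n, j ≠ k → inn (ee n j - ee n k) ν = 1 →
      Real.sin (α * inn (ee n j - ee n k)
        (rhoP n p α g ω + Real.sign (2 * π * p / α - n * g) • μ) / 2) ≠ 0) ∧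
    Vnu n α g ν (rhoP n p α g ω + Real.sign (2 * π * p / α - n * g) • μ) = 0 := by
  have hn0 : 0 < n := by omega
  obtain ⟨hq1, hq2, hpq, hbranch⟩ := htype
  set β : ℝ := 2 * π / α with hβdef
  have hβpos : 0 < β := by rw [hβdef]; positivity
  have hng : (n:ℝ) * g = β * p - Mz := by rw [hβdef]; linear_combination -hMz
  have hπαβ : π = α * β / 2 := by rw [hβdef]; field_simp
  have hMabsr : |(Mz:ℝ)| = ((|Mz| : ℤ) : ℝ) := by push_cast; rfl
  have hM1 : (1:ℝ) ≤ |(Mz:ℝ)| := by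
    have h1 : (1:ℤ) ≤ |Mz| := Int.one_le_abs (by omega)
    rw [hMabsr]; exact_mod_cast h1
  have hzpq : ((p:ℤ) * q) ≡ 1 [ZMOD (n:ℤ)] := by
    have h := Int.natCast_modEq_iff.mpr (hpq : (p*q) ≡ 1 [MOD n])
    push_cast at h; exact h
  -- branch data
  obtain ⟨sz, q', hsz, hsign, hszM, hq'1, hq'2, hβM, hpq'⟩ :
      ∃ sz : ℤ, ∃ q' : ℕ, (sz = 1 ∨ sz = -1) ∧ Real.sign ((Mz:ℝ)) = (sz:ℝ) ∧
        ((sz:ℝ)) * Mz = |(Mz:ℝ)| ∧ 1 ≤ q' ∧ q' ≤ n - 1 ∧ |(Mz:ℝ)| * q' < β ∧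
        ((p:ℤ) * q' ≡ sz [ZMOD (n:ℤ)]) := by
    have hn0' : (0:ℝ) < n := by positivity
    rcases hbranch with ⟨h1, h2⟩ | ⟨h1, h2⟩
    · have hq0 : (0:ℝ) < q := by exact_mod_cast hq1
      have hpos : (0:ℝ) < Mz := by
        have he : (n:ℝ) * (β*((p:ℝ)/n)) = β*p := by field_simp
        have h2' := mul_lt_mul_of_pos_left h2 hn0'
        linarith
      refine ⟨1, q, Or.inl rfl, ?_, ?_, hq1, hq2, ?_, by simpa using hzpq⟩
      · simpa using Real.sign_of_pos hpos
      · rw [abs_of_pos hpos]; simp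
      · rw [abs_of_pos hpos]
        have he : (n:ℝ) * (β*((p:ℝ)/n - 1/((n:ℝ)*q))) = β*p - β/q := by
          field_simp
        have h1' := mul_lt_mul_of_pos_left h1 hn0'
        have hlt : (Mz:ℝ) < β/q := by linarith
        calc (Mz:ℝ)*q < (β/q)*q := mul_lt_mul_of_pos_right hlt hq0
          _ = β := by field_simp
    · have hqcast : (q:ℝ) ≤ (n:ℝ) - 1 := by
        have : ((q:ℕ):ℝ) ≤ ((n-1:ℕ):ℝ) := by exact_mod_cast hq2
        rwa [Nat.cast_sub (by omega), Nat.cast_one] at this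
      have hq0 : (0:ℝ) < (n:ℝ) - q := by linarith
      have hneg : (Mz:ℝ) < 0 := by
        have he : (n:ℝ) * (β*((p:ℝ)/n)) = β*p := by field_simp
        have h1' := mul_lt_mul_of_pos_left h1 hn0'
        linarith
      have hcastnq : ((n - q : ℕ) : ℝ) = (n:ℝ) - q := by
        rw [Nat.cast_sub (by omega)]
      refine ⟨-1, n - q, Or.inr rfl, ?_, ?_, by omega, by omega, ?_, ?_⟩
      · simpa using Real.sign_of_neg hneg
      · rw [abs_of_neg hneg]; norm_num
      · rw [abs_of_neg hneg, hcastnq]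
        have he : (n:ℝ) * (β*((p:ℝ)/n + 1/((n:ℝ)*((n:ℝ) - q)))) = β*p + β/((n:ℝ)-q) := by
          field_simp
        have h2' := mul_lt_mul_of_pos_left h2 hn0'
        have hlt : -(Mz:ℝ) < β/((n:ℝ)-q) := by linarith
        calc -(Mz:ℝ)*((n:ℝ)-q) < (β/((n:ℝ)-q))*((n:ℝ)-q) := by
              apply mul_lt_mul_of_pos_right hlt hq0
          _ = β := by field_simp
      · have hc : ((n - q : ℕ) : ℤ) = (n:ℤ) - q := by
          rw [Int.ofNat_sub (by omega)]
        rw [hc]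
        have he : (p:ℤ) * ((n:ℤ) - q) = n*p - p*q := by ring
        rw [he]
        calc (n:ℤ)*p - p*q ≡ 0 - 1 [ZMOD (n:ℤ)] :=
              Int.ModEq.sub ((dvd_mul_right (n:ℤ) p).modEq_zero_int) hzpq
          _ = -1 := by ring
  have hsz2 : (sz:ℝ)*(sz:ℝ) = 1 := by rcases hsz with h | h <;> rw [h] <;> norm_num
  have hszM2 : (sz:ℝ) * |(Mz:ℝ)| = (Mz:ℝ) := by
    rw [← hszM, ← mul_assoc, hsz2, one_mul]
  rw [hMz] at hμ hμν ⊢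
  rw [hsign]
  obtain ⟨m, hmsum, hμeq⟩ := hμ
  obtain ⟨σ, hνeq⟩ := hν
  -- basic Finset facts
  have hnmem : n ∉ Icc 1 (n-1) := by simp only [Finset.mem_Icc]; omega
  have hIcc : Icc 1 n = insert n (Icc 1 (n-1)) := by
    ext z; simp only [Finset.mem_Icc, Finset.mem_insert]; omega
  have haan : aa n p n = -∑ ℓ ∈ Icc 1 (n-1), aa n p ℓ := by
    have h0 := sum_aa hn hpq (p := p)
    rw [hIcc, Finset.sum_insert hnmem] at h0
    rw [eq_neg_iff_add_eq_zero]; exact h0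
  -- pairings with a generic lattice combination
  have hpairgen : ∀ (c : ℕ → ℝ), ∀ ℓ ∈ Icc 1 (n-1),
      inn (aa n p ℓ) (∑ k ∈ Icc 1 (n-1), c k • ω k) = c ℓ := by
    intro c ℓ hℓ
    simp only [Finset.mem_Icc] at hℓ
    rw [inn_sum_right]
    rw [Finset.sum_congr rfl (fun k hk => by
      simp only [Finset.mem_Icc] at hk
      rw [inn_smul_right, hωδ ℓ hℓ.1 hℓ.2 k hk.1 hk.2])]
    rw [Finset.sum_congr rfl (fun k _ => by
      rw [mul_ite, mul_one, mul_zero])]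
    rw [Finset.sum_ite_eq]
    simp only [Finset.mem_Icc]
    rw [if_pos hℓ]
  have hpairμ : ∀ ℓ ∈ Icc 1 (n-1), inn (aa n p ℓ) μ = (m ℓ : ℝ) := by
    intro ℓ hℓ; rw [hμeq]; exact hpairgen (fun k => (m k : ℝ)) ℓ hℓ
  set SNR : ℝ := ∑ i ∈ Icc 1 (n-1), (m i : ℝ) with hSNR
  have hpairμn : inn (aa n p n) μ = -SNR := by
    rw [haan, inn_neg_left, inn_sum_left,
      Finset.sum_congr rfl (fun ℓ hℓ => hpairμ ℓ hℓ)]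
  -- indicator for the wrapped simple roots
  set wI : ℕ → ℕ := fun ℓ => if n - p + 1 ≤ ℓ then 1 else 0 with hwI
  set yR : ℕ → ℝ := fun ℓ => if ℓ = n then |(Mz:ℝ)| - SNR else (m ℓ : ℝ) with hyR
  have hωpair : ∀ ℓ, ℓ ∈ Icc 1 (n-1) → ∀ s : Finset ℕ, s ⊆ Icc 1 (n-1) →
      inn (aa n p ℓ) (∑ k ∈ s, ω k) = if ℓ ∈ s then 1 else 0 := by
    intro ℓ hℓ s hs
    simp only [Finset.mem_Icc] at hℓ
    rw [inn_sum_right]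
    rw [Finset.sum_congr rfl (fun k hk => by
      have hk2 := hs hk
      simp only [Finset.mem_Icc] at hk2
      rw [hωδ ℓ hℓ.1 hℓ.2 k hk2.1 hk2.2])]
    exact Finset.sum_ite_eq s ℓ (fun _ => (1:ℝ))
  have hpairρ : ∀ ℓ ∈ Icc 1 (n-1),
      inn (aa n p ℓ) (rhoP n p α g ω) = g - β * (wI ℓ : ℝ) := by
    intro ℓ hℓ
    have hℓ2 := hℓ
    simp only [Finset.mem_Icc] at hℓ2
    unfold rhoP
    rw [← hβdef, inn_add_right, inn_smul_right, inn_smul_right]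
    rw [hωpair ℓ hℓ _ (Finset.Icc_subset_Icc le_rfl (by omega)),
        hωpair ℓ hℓ _ (Finset.Icc_subset_Icc (by omega) le_rfl)]
    by_cases hc : n - p + 1 ≤ ℓ
    · rw [if_neg (by simp only [Finset.mem_Icc]; omega),
        if_pos (by simp only [Finset.mem_Icc]; omega)]
      simp only [hwI]
      rw [if_pos hc]
      push_cast; ring
    · rw [if_pos (by simp only [Finset.mem_Icc]; omega),
        if_neg (by simp only [Finset.mem_Icc]; omega)]
      simp only [hwI]
      rw [if_neg hc]
      push_cast; ring
  have hwsumN : ∑ ℓ ∈ Icc 1 (n-1), wI ℓ = p - 1 := by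
    have hsub : Icc (n-p+1) (n-1) ⊆ Icc 1 (n-1) := Finset.Icc_subset_Icc (by omega) le_rfl
    rw [← Finset.sum_subset hsub (fun x hx hnx => by
      simp only [Finset.mem_Icc] at hx hnx
      simp only [hwI]
      rw [if_neg (by omega)])]
    rw [Finset.sum_congr rfl (fun x hx => by
      simp only [Finset.mem_Icc] at hx
      simp only [hwI]
      rw [if_pos (by omega)])]
    rw [Finset.sum_const, Nat.card_Icc, smul_eq_mul, mul_one]
    omega
  have hpairρn : inn (aa n p n) (rhoP n p α g ω) = g - β + Mz := by
    rw [haan, inn_neg_left, inn_sum_left,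
      Finset.sum_congr rfl (fun ℓ hℓ => hpairρ ℓ hℓ)]
    rw [Finset.sum_sub_distrib, Finset.sum_const, ← Finset.mul_sum]
    have hcast1 : ∑ ℓ ∈ Icc 1 (n-1), (wI ℓ : ℝ) = ((p:ℝ) - 1) := by
      rw [← Nat.cast_sum, hwsumN, Nat.cast_sub hp1, Nat.cast_one]
    rw [hcast1, Nat.card_Icc]
    have hcast2 : ((n - 1 + 1 - 1 : ℕ) : ℝ) = (n:ℝ) - 1 := by
      rw [show n - 1 + 1 - 1 = n - 1 from by omega, Nat.cast_sub (by omega), Nat.cast_one]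
    rw [nsmul_eq_mul, hcast2]
    linear_combination -hng
  have hPAIR : ∀ ℓ ∈ Icc 1 n,
      inn (aa n p ℓ) (rhoP n p α g ω + (sz:ℝ) • μ)
        = g - β * (wI ℓ : ℝ) + (sz:ℝ) * yR ℓ := by
    intro ℓ hℓ
    simp only [Finset.mem_Icc] at hℓ
    rw [inn_add_right, inn_smul_right]
    rcases Nat.lt_or_ge ℓ n with h | h
    · have hmem : ℓ ∈ Icc 1 (n-1) := by simp only [Finset.mem_Icc]; omega
      rw [hpairρ ℓ hmem, hpairμ ℓ hmem]
      simp only [hyR]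
      rw [if_neg (by omega)]
    · have hℓn : ℓ = n := by omega
      subst hℓn
      rw [hpairρn, hpairμn]
      simp only [hwI, hyR]
      split_ifs with h1
      · push_cast; linear_combination -hszM2
      · omega
  -- data for ν
  set χf : ℕ → ℤ := fun i => if h : i < n then
      (if ((σ ⟨i, h⟩ : ℕ) + 1 ≤ r) then 1 else 0) else 0 with hχf
  set d : ℕ → ℤ := fun ℓ => χf ((ℓ-1) % n) - χf ((ℓ+p-1) % n) with hd
  have hχν : ∀ i : Fin n, ν i = (χf (i:ℕ) : ℝ) - (r:ℝ)/n := by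
    intro i
    rw [hνeq]
    simp only [omegaStd, hχf]
    rw [dif_pos i.isLt]
    have : (⟨(i:ℕ), i.isLt⟩ : Fin n) = i := rfl
    rw [this]
    split_ifs <;> norm_num
  have hχb : ∀ i, 0 ≤ χf i ∧ χf i ≤ 1 := by
    intro i; simp only [hχf]; split_ifs <;> omega
  have hdpair : ∀ ℓ, 1 ≤ ℓ → inn (aa n p ℓ) ν = ((d ℓ : ℤ) : ℝ) := by
    intro ℓ hℓ
    unfold aa
    rw [inn_sub_left, inn_ee hn0 ℓ hℓ ν, inn_ee hn0 (ℓ+p) (by omega) ν]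
    rw [hχν, hχν]
    simp only [hd]
    push_cast
    ring
  have hdbound : ∀ ℓ, -1 ≤ d ℓ ∧ d ℓ ≤ 1 := by
    intro ℓ
    have h1 := hχb ((ℓ-1) % n)
    have h2 := hχb ((ℓ+p-1) % n)
    simp only [hd]
    omega
  have hdsum : ∑ ℓ ∈ Icc 1 n, d ℓ = 0 := by
    have hreal : ∑ ℓ ∈ Icc 1 n, ((d ℓ : ℤ) : ℝ) = 0 := by
      calc ∑ ℓ ∈ Icc 1 n, ((d ℓ : ℤ) : ℝ)
          = ∑ ℓ ∈ Icc 1 n, inn (aa n p ℓ) ν := by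
            refine Finset.sum_congr rfl (fun ℓ hℓ => ?_)
            simp only [Finset.mem_Icc] at hℓ
            exact (hdpair ℓ hℓ.1).symm
        _ = inn (∑ ℓ ∈ Icc 1 n, aa n p ℓ) ν := (inn_sum_left _ _ _).symm
        _ = 0 := by rw [sum_aa hn hpq, inn_zero_left]
    exact_mod_cast hreal
  set Dsum : ℤ := ∑ ℓ ∈ Icc 1 (n-1), d ℓ with hDsum
  have hdn : d n = -Dsum := by
    rw [hIcc, Finset.sum_insert hnmem] at hdsum
    omega
  -- the nonvanishing of denominators
  have H1 : ∀ j ∈ Icc 1 n, ∀ k ∈ Icc 1 n, j ≠ k →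
      Real.sin (α * inn (ee n j - ee n k) (rhoP n p α g ω + (sz:ℝ) • μ) / 2) ≠ 0 := by
    intro j hj k hk hjk
    simp only [Finset.mem_Icc] at hj hk
    obtain ⟨t, ht1, ht2, htm⟩ := chain_t (q := q) hn hpq hj.1 hj.2 hk.1 hk.2 hjk
    set res : ℕ → ℕ := fun s => (j - 1 + s*p) % n + 1 with hres
    have hresmem : ∀ s, res s ∈ Icc 1 n := by
      intro s
      simp only [hres, Finset.mem_Icc]
      have := Nat.mod_lt (j - 1 + s*p) hn0
      omega
    have hvec : ee n j - ee n k = ∑ s ∈ Finset.range t, aa n p (res s) := by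
      rw [ee_congr htm.symm, telescope n p j t]
      refine Finset.sum_congr rfl (fun s _ => ?_)
      apply aa_congr
      simp only [hres]
      conv_rhs => rw [Nat.mod_add_mod]
      congr 1
      omega
    set WN : ℕ := ∑ s ∈ Finset.range t, wI (res s) with hWN
    set Y : ℝ := ∑ s ∈ Finset.range t, yR (res s) with hY
    have hDval : inn (ee n j - ee n k) (rhoP n p α g ω + (sz:ℝ) • μ)
        = t * g - β * (WN:ℝ) + (sz:ℝ) * Y := by
      rw [hvec, inn_sum_left,
        Finset.sum_congr rfl (fun s _ => hPAIR (res s) (hresmem s))]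
      rw [Finset.sum_add_distrib, Finset.sum_sub_distrib, Finset.sum_const,
        Finset.card_range, ← Finset.mul_sum, ← Finset.mul_sum]
      rw [hY, hWN]
      push_cast
      ring
    intro hsin
    rw [Real.sin_eq_zero_iff] at hsin
    obtain ⟨mI, hmI⟩ := hsin
    rw [hDval] at hmI
    have hE : (mI:ℝ) * β = t * g - β * (WN:ℝ) + (sz:ℝ) * Y := by
      rw [hπαβ] at hmI
      have h2 : α * ((mI:ℝ) * β) = α * (t * g - β * (WN:ℝ) + (sz:ℝ) * Y) := by
        linarith
      exact mul_left_cancel₀ (ne_of_gt hα) h2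
    set v : ℤ := sz * ((t:ℤ)*(p:ℤ) - (n:ℤ)*(mI + (WN:ℤ))) with hv
    have hu0 : (t:ℤ)*(p:ℤ) - (n:ℤ)*(mI + (WN:ℤ)) ≠ 0 := by
      intro hcon
      have heq2 : ((t*p : ℕ) : ℤ) = (n:ℤ)*(mI + (WN:ℤ)) := by push_cast; linarith [hcon]
      have hdvd : (n:ℤ) ∣ ((t*p:ℕ):ℤ) := ⟨mI + (WN:ℤ), heq2⟩
      have hdvdn : n ∣ t * p := by exact_mod_cast hdvd
      have := Nat.le_of_dvd (by omega) (Nat.Coprime.dvd_of_dvd_mul_right hcop.symm hdvdn)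
      omega
    have hv0 : v ≠ 0 := by
      rw [hv]
      apply mul_ne_zero _ hu0
      rcases hsz with h | h <;> rw [h] <;> norm_num
    have hveq : β * ((v:ℤ):ℝ) = (t:ℝ) * |(Mz:ℝ)| - (n:ℝ) * Y := by
      have hvcast : ((v:ℤ):ℝ) = (sz:ℝ) * ((t:ℝ)*(p:ℝ) - (n:ℝ)*((mI:ℝ) + (WN:ℝ))) := by
        rw [hv]; push_cast; ring
      rw [hvcast]
      linear_combination (-(n:ℝ)*(sz:ℝ))*hE + (-(sz:ℝ)*(t:ℝ))*hng + (t:ℝ)*hszM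
        + (-(n:ℝ)*Y)*hsz2
    have hyR0 : ∀ ℓ ∈ Icc 1 n, 0 ≤ yR ℓ := by
      intro ℓ _
      simp only [hyR]
      split_ifs
      · linarith [hmsum]
      · positivity
    have hY0 : 0 ≤ Y := by
      rw [hY]
      exact Finset.sum_nonneg (fun s _ => hyR0 (res s) (hresmem s))
    have hYM : Y ≤ |(Mz:ℝ)| := by
      have hinj : ∀ s1 ∈ Finset.range t, ∀ s2 ∈ Finset.range t, res s1 = res s2 → s1 = s2 := by
        intro s1 hs1 s2 hs2 hre
        simp only [Finset.mem_range] at hs1 hs2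
        simp only [hres] at hre
        exact res_inj hcop (c := j - 1) (by omega) (by omega) (by omega)
      calc Y = ∑ ℓ ∈ (Finset.range t).image res, yR ℓ := (Finset.sum_image hinj).symm
        _ ≤ ∑ ℓ ∈ Icc 1 n, yR ℓ := Finset.sum_le_sum_of_subset_of_nonneg
            (fun ℓ hℓ => by
              obtain ⟨s, _, hs⟩ := Finset.mem_image.mp hℓ
              rw [← hs]; exact hresmem s)
            (fun i hi _ => hyR0 i hi)
        _ = |(Mz:ℝ)| := by
            rw [hIcc, Finset.sum_insert hnmem]
            rw [Finset.sum_congr rfl (fun ℓ hℓ => by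
              simp only [hyR]
              rw [if_neg (by simp only [Finset.mem_Icc] at hℓ; omega)] : ∀ ℓ ∈ Icc 1 (n-1), yR ℓ = (m ℓ:ℝ))]
            simp only [hyR, if_pos rfl]
            rw [← hSNR]
            ring
    have hcong : (n:ℤ) ∣ ((t:ℤ) - v * q') := by
      have h1 : ((t:ℤ)*(p:ℤ) - (n:ℤ)*(mI + (WN:ℤ))) ≡ (t:ℤ)*p [ZMOD (n:ℤ)] := by
        rw [Int.modEq_iff_dvd]
        exact ⟨mI + (WN:ℤ), by ring⟩
      have h2 : v*(q':ℤ) ≡ (t:ℤ) [ZMOD (n:ℤ)] := by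
        calc v*(q':ℤ) = (sz*q')*((t:ℤ)*(p:ℤ) - (n:ℤ)*(mI + (WN:ℤ))) := by rw [hv]; ring
          _ ≡ (sz*q')*((t:ℤ)*p) [ZMOD (n:ℤ)] := h1.mul_left _
          _ = (sz*t)*((p:ℤ)*q') := by ring
          _ ≡ (sz*t)*sz [ZMOD (n:ℤ)] := hpq'.mul_left _
          _ = t*(sz*sz) := by ring
          _ = t := by rcases hsz with h | h <;> rw [h] <;> ring
      exact h2.dvd
    exact key_arith n q' t β |(Mz:ℝ)| Y v hn hq'1 hβM (by linarith) ht1 ht2 hY0 hYM hv0 hveq hcong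
  refine ⟨fun j hj k hk hjk _ => H1 j hj k hk hjk, ?_⟩
  -- helper to conclude vanishing of the product
  have HZ : ∀ j0 k0 : ℕ, j0 ∈ Icc 1 n → k0 ∈ Icc 1 n → j0 ≠ k0 →
      inn (ee n j0 - ee n k0) ν = 1 →
      Real.sin (α * (inn (ee n j0 - ee n k0) (rhoP n p α g ω + (sz:ℝ) • μ) + g) / 2) = 0 →
      Vnu n α g ν (rhoP n p α g ω + (sz:ℝ) • μ) = 0 := by
    intro j0 k0 hj0 hk0 hne hcond hsin
    unfold Vnu
    apply Finset.prod_eq_zero hj0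
    apply Finset.prod_eq_zero hk0
    rw [if_pos ⟨hne, hcond⟩, hsin, zero_div]
  by_cases hA : ∃ ℓ0 ∈ Icc 1 (n-1), m ℓ0 = 0 ∧ d ℓ0 = -1
  · obtain ⟨ℓ0, hℓ0mem, hm0, hd0⟩ := hA
    have hℓ0b : 1 ≤ ℓ0 ∧ ℓ0 ≤ n-1 := by simpa [Finset.mem_Icc] using hℓ0mem
    set j0 : ℕ := (ℓ0 + p - 1) % n + 1 with hj0
    have hj0mem : j0 ∈ Icc 1 n := by
      simp only [hj0, Finset.mem_Icc]
      have := Nat.mod_lt (ℓ0 + p - 1) hn0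
      omega
    have hk0mem : ℓ0 ∈ Icc 1 n := by simp only [Finset.mem_Icc]; omega
    have hj0congr : j0 % n = (ℓ0 + p) % n := by
      simp only [hj0]
      rw [Nat.mod_add_mod]
      congr 1
      omega
    have hvecA : ee n j0 - ee n ℓ0 = -(aa n p ℓ0) := by
      unfold aa
      rw [ee_congr hj0congr]
      abel
    have hneA : j0 ≠ ℓ0 := by
      intro hcon
      have h1 : (ℓ0 - 1 + p) % n = (ℓ0 - 1) % n := by
        rw [Nat.mod_eq_of_lt (show ℓ0 - 1 < n by omega)]
        simp only [hj0] at hcon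
        rw [show ℓ0 + p - 1 = ℓ0 - 1 + p from by omega] at hcon
        omega
      have h2' : (ℓ0-1) + p ≡ (ℓ0-1) + 0 [MOD n] := by
        simpa [Nat.ModEq] using h1
      have h2 : p ≡ 0 [MOD n] := Nat.ModEq.add_left_cancel' _ h2'
      have := Nat.le_of_dvd (by omega) ((Nat.modEq_zero_iff_dvd).mp h2)
      omega
    have hcondA : inn (ee n j0 - ee n ℓ0) ν = 1 := by
      rw [hvecA, inn_neg_left, hdpair ℓ0 (by omega), hd0]
      norm_num
    have hinnA : inn (ee n j0 - ee n ℓ0) (rhoP n p α g ω + (sz:ℝ) • μ)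
        = -g + β * ((wI ℓ0 : ℕ) : ℝ) := by
      rw [hvecA, inn_neg_left, hPAIR ℓ0 hk0mem]
      simp only [hyR]
      rw [if_neg (by omega), hm0]
      push_cast
      ring
    apply HZ j0 ℓ0 hj0mem hk0mem hneA hcondA
    rw [hinnA]
    have hrw : α * (-g + β * ((wI ℓ0 : ℕ):ℝ) + g) / 2 = (wI ℓ0 : ℝ) * π := by
      rw [hπαβ]; ring
    rw [hrw]
    exact Real.sin_nat_mul_pi (wI ℓ0)
  · by_cases hB : Dsum = 1 ∧ SNR = |(Mz:ℝ)|
    · have hj0mem : p ∈ Icc 1 n := by simp only [Finset.mem_Icc]; omega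
      have hk0mem : n ∈ Icc 1 n := by simp only [Finset.mem_Icc]; omega
      have hneB : p ≠ n := by omega
      have hvecB : ee n p - ee n n = -(aa n p n) := by
        unfold aa
        rw [ee_congr (Nat.add_mod_left n p)]
        abel
      have hcondB : inn (ee n p - ee n n) ν = 1 := by
        rw [hvecB, inn_neg_left, hdpair n (by omega), hdn, hB.1]
        norm_num
      have hinnB : inn (ee n p - ee n n) (rhoP n p α g ω + (sz:ℝ) • μ) = -g + β := by
        rw [hvecB, inn_neg_left, hPAIR n (by simp only [Finset.mem_Icc]; omega)]
        simp only [hyR, hwI]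
        split_ifs with h1
        · rw [hB.2]; push_cast; ring
        · omega
      apply HZ p n hj0mem hk0mem hneB hcondB
      rw [hinnB]
      have hrw : α * (-g + β + g) / 2 = π := by rw [hπαβ]; ring
      rw [hrw]
      exact Real.sin_pi
    · exfalso
      apply hμν
      push_neg at hA
      set m' : ℕ → ℕ := fun ℓ => ((m ℓ : ℤ) + d ℓ).toNat with hm'
      have hnn : ∀ ℓ ∈ Icc 1 (n-1), 0 ≤ (m ℓ : ℤ) + d ℓ := by
        intro ℓ hℓ
        rcases hdbound ℓ with ⟨hb1, hb2⟩
        by_cases hdl : d ℓ = -1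
        · have hmne : m ℓ ≠ 0 := fun h0 => (hA ℓ hℓ h0) hdl
          omega
        · omega
      have hm'cast : ∀ ℓ ∈ Icc 1 (n-1), ((m' ℓ : ℕ) : ℝ) = (m ℓ : ℝ) + ((d ℓ : ℤ) : ℝ) := by
        intro ℓ hℓ
        have h1 : ((m' ℓ : ℕ) : ℤ) = (m ℓ : ℤ) + d ℓ := by
          simp only [hm']
          exact Int.toNat_of_nonneg (hnn ℓ hℓ)
        exact_mod_cast h1
      have hDle : Dsum ≤ 1 := by
        have := (hdbound n).1
        omega
      have hsumgen : ∀ c : ℕ → ℝ, (∑ i, (∑ ℓ ∈ Icc 1 (n-1), c ℓ • ω ℓ) i) = 0 := by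
        intro c
        have h1 : ∀ i : Fin n, (∑ ℓ ∈ Icc 1 (n-1), c ℓ • ω ℓ) i
            = ∑ ℓ ∈ Icc 1 (n-1), c ℓ * ω ℓ i := by
          intro i
          rw [Finset.sum_apply]
          rfl
        rw [Finset.sum_congr rfl (fun i _ => h1 i), Finset.sum_comm]
        apply Finset.sum_eq_zero
        intro ℓ hℓ
        simp only [Finset.mem_Icc] at hℓ
        rw [← Finset.mul_sum, hωE ℓ hℓ.1 hℓ.2, mul_zero]
      have hsumμ : ∑ i, μ i = 0 := by rw [hμeq]; exact hsumgen _
      have homega_sum : ∑ i : Fin n, omegaStd n r i = 0 := by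
        unfold omegaStd
        rw [Finset.sum_sub_distrib, Finset.sum_const, Finset.card_univ, Fintype.card_fin]
        have hfil : ∑ i : Fin n, (if (i:ℕ)+1 ≤ r then (1:ℝ) else 0) = r := by
          rw [Fin.sum_univ_eq_sum_range (fun i => if i+1 ≤ r then (1:ℝ) else 0) n]
          have hfe : (Finset.range n).filter (fun i => i+1 ≤ r) = Finset.range r := by
            ext z; simp only [Finset.mem_filter, Finset.mem_range]; omega
          rw [Finset.sum_ite, Finset.sum_const, Finset.sum_const, hfe, Finset.card_range]
          simp
        rw [hfil, nsmul_eq_mul]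
        have : (n:ℝ) * ((r:ℝ)/n) = r := by
          field_simp
        rw [this]
        ring
      have hsumν : ∑ i, ν i = 0 := by
        rw [hνeq]
        rw [Equiv.sum_comp σ (omegaStd n r)]
        exact homega_sum
      have hZ : ((μ + ν) - ∑ k ∈ Icc 1 (n-1), ((m' k:ℕ):ℝ) • ω k) = 0 := by
        apply const_of_pairings hn hpq (q := q)
        · have hexp : ∀ i : Fin n, (μ + ν - ∑ k ∈ Icc 1 (n-1), ((m' k:ℕ):ℝ) • ω k) i
              = μ i + ν i - (∑ k ∈ Icc 1 (n-1), ((m' k:ℕ):ℝ) • ω k) i := fun i => rfl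
          rw [Finset.sum_congr rfl (fun i _ => hexp i), Finset.sum_sub_distrib,
            Finset.sum_add_distrib, hsumμ, hsumν, hsumgen]
          norm_num
        · intro ℓ hℓ
          have hℓ1 : 1 ≤ ℓ := by
            simp only [Finset.mem_Icc] at hℓ; omega
          rw [inn_sub_right, inn_add_right, hpairμ ℓ hℓ, hdpair ℓ hℓ1,
            hpairgen (fun k => ((m' k:ℕ):ℝ)) ℓ hℓ, hm'cast ℓ hℓ]
          ring
      refine ⟨m', ?_, ?_⟩
      · have hdc : ∑ ℓ ∈ Icc 1 (n-1), ((d ℓ:ℤ):ℝ) = ((Dsum:ℤ):ℝ) := by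
          rw [hDsum]; push_cast; rfl
        have hsumeq : ∑ j ∈ Icc 1 (n-1), ((m' j:ℕ):ℝ) = SNR + ((Dsum:ℤ):ℝ) := by
          rw [Finset.sum_congr rfl hm'cast, Finset.sum_add_distrib, hdc, hSNR]
        rw [hsumeq]
        by_cases hD1 : Dsum = 1
        · have hne : SNR ≠ |(Mz:ℝ)| := fun h => hB ⟨hD1, h⟩
          have hSN : SNR = ((∑ ℓ ∈ Icc 1 (n-1), m ℓ : ℕ):ℝ) := by
            rw [hSNR]; push_cast; rfl
          have hlt : ((∑ ℓ ∈ Icc 1 (n-1), m ℓ : ℕ):ℤ) < |Mz| := by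
            have hle : SNR ≤ |(Mz:ℝ)| := hmsum
            have hlt2 := lt_of_le_of_ne hle hne
            rw [hSN, hMabsr] at hlt2
            exact_mod_cast hlt2
          have hplus : ((∑ ℓ ∈ Icc 1 (n-1), m ℓ : ℕ):ℝ) + 1 ≤ |(Mz:ℝ)| := by
            rw [hMabsr]
            exact_mod_cast hlt
          rw [hSN, hD1]
          push_cast
          linarith
        · have hD0 : ((Dsum:ℤ):ℝ) ≤ 0 := by
            have : Dsum ≤ 0 := by omega
            exact_mod_cast this
          linarith [hmsum]
      · exact sub_eq_zero.mp hZ
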